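/- (Upper bound (A.10), general m.) Suppose the m-parameter design problem of the context satisfies condition (2.9) with constant c₀ > 0 and Q(β,β̃) ≤ c₁ |ℓ(β) − ℓ(β̃)|^{−γ} for all β, β̃ ∈ ℬ, with constants c₁, γ > 0. Let B = ℓ(β_max) − ℓ(β_min) > 0 and let ξ be a design supported at at most N points, and set K = m·C(N,m) (with C(N,m) the binomial coefficient). Then Φ(ξ) = inf_{β∈ℬ} det M(ξ,β)/det M(ξ[β],β) ≤ c₀ m c₁ (2(K+1)/B)^γ. -/

import Mathlib

open scoped BigOperators

/-- An approximate design: a finitely supported probability measure on `X`,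
given by its support points and positive weights summing to one. -/
structure Design (X : Type*) where
  support : Finset X
  w : X → ℝ
  w_pos : ∀ x ∈ support, 0 < w x
  w_zero : ∀ x ∉ support, w x = 0
  sum_one : ∑ x ∈ support, w x = 1

/-- Information matrix `M(ξ,β) = ∑ₖ wₖ f(xₖ,β) f(xₖ,β)ᵀ`. -/
noncomputable def infoMat {X : Type*} {m : ℕ} (f : X → ℝ → Fin m → ℝ)
    (ξ : Design X) (β : ℝ) : Matrix (Fin m) (Fin m) ℝ :=
  ∑ x ∈ ξ.support, ξ.w x • Matrix.vecMulVec (f x β) (f x β)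

/-- `I_m(x₁,…,x_m,β) = det[f(x₁,β) ⋯ f(x_m,β)]²`. -/
noncomputable def detIm {X : Type*} {m : ℕ} (f : X → ℝ → Fin m → ℝ)
    (xs : Fin m → X) (β : ℝ) : ℝ :=
  (Matrix.det (Matrix.of fun i j => f (xs j) β i)) ^ 2

lemma detIm_eq_sq {X : Type*} {m : ℕ} (f : X → ℝ → Fin m → ℝ) (g : Fin m → X) (β : ℝ) :
    detIm f g β = (Matrix.det (Matrix.of fun i j => f (g i) β j)) ^ 2 := by
  rw [detIm, show (Matrix.of fun i j => f (g j) β i)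
      = Matrix.transpose (Matrix.of fun i j => f (g i) β j) from rfl, Matrix.det_transpose]

lemma detIm_comp_perm {X : Type*} {m : ℕ} (f : X → ℝ → Fin m → ℝ) (xs : Fin m → X)
    (σ : Equiv.Perm (Fin m)) (β : ℝ) :
    detIm f (xs ∘ σ) β = detIm f xs β := by
  rw [detIm, detIm]
  have h : (Matrix.of fun i j => f ((xs ∘ σ) j) β i)
      = (Matrix.of fun i j => f (xs j) β i).submatrix id σ := rfl
  rw [h, Matrix.det_permute', mul_pow]
  rcases Int.units_eq_one_or (Equiv.Perm.sign σ) with hσ | hσ <;> simp [hσ]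

/-- Cauchy–Binet style identity for the information matrix. -/
lemma infoMat_det_eq {X : Type*} {m : ℕ} (f : X → ℝ → Fin m → ℝ) (ξ : Design X) (β : ℝ) :
    (infoMat f ξ β).det = (m.factorial : ℝ)⁻¹ *
      ∑ g ∈ Fintype.piFinset (fun _ : Fin m => ξ.support),
        (∏ i, ξ.w (g i)) * detIm f g β := by
  classical
  set T := Fintype.piFinset (fun _ : Fin m => ξ.support) with hT
  set D : (Fin m → X) → ℝ := fun g => Matrix.det (Matrix.of fun i j => f (g i) β j) with hD
  set t : (Fin m → X) → ℝ := fun g => (∏ i, ξ.w (g i) * f (g i) β i) * D g with ht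
  have hrow : infoMat f ξ β = fun i => ∑ x ∈ ξ.support, (ξ.w x * f x β i) • (f x β) := by
    funext i j
    simp only [infoMat, Matrix.sum_apply, Matrix.smul_apply, Matrix.vecMulVec_apply,
      smul_eq_mul, Finset.sum_apply, Pi.smul_apply]
    exact Finset.sum_congr rfl fun x _ => by ring
  have hdet : (infoMat f ξ β).det = ∑ g ∈ T, t g := by
    have hms := (Matrix.detRowAlternating : (Fin m → ℝ) [⋀^Fin m]→ₗ[ℝ] ℝ).toMultilinearMap.map_sum_finset
      (fun i x => (ξ.w x * f x β i) • (f x β)) (fun _ : Fin m => ξ.support)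
    have h1 : (infoMat f ξ β).det
        = (Matrix.detRowAlternating : (Fin m → ℝ) [⋀^Fin m]→ₗ[ℝ] ℝ).toMultilinearMap
            (fun i => ∑ x ∈ ξ.support, (ξ.w x * f x β i) • (f x β)) := by
      rw [hrow]; rfl
    rw [h1, hms]
    refine Finset.sum_congr rfl fun g hg => ?_
    have := (Matrix.detRowAlternating : (Fin m → ℝ) [⋀^Fin m]→ₗ[ℝ] ℝ).toMultilinearMap.map_smul_univ
      (fun i => ξ.w (g i) * f (g i) β i) (fun i => f (g i) β)
    show _ = (∏ i, ξ.w (g i) * f (g i) β i) * Matrix.detRowAlternating (fun i => f (g i) β)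
    simpa [smul_eq_mul] using this
  have hsym : ∑ g ∈ T, (∏ i, ξ.w (g i)) * detIm f g β
      = (m.factorial : ℝ) * ∑ g ∈ T, t g := by
    have step1 : ∀ g, (∏ i, ξ.w (g i)) * detIm f g β
        = ∑ σ : Equiv.Perm (Fin m), t (g ∘ σ) := by
      intro g
      have hDexp : D g = ∑ σ : Equiv.Perm (Fin m),
          ((Equiv.Perm.sign σ : ℤ) : ℝ) * ∏ i, f (g (σ i)) β i := by
        rw [hD]; exact Matrix.det_apply' _
      have hDperm : ∀ σ : Equiv.Perm (Fin m),
          D (g ∘ σ) = ((Equiv.Perm.sign σ : ℤ) : ℝ) * D g := by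
        intro σ
        have h : (Matrix.of fun i j => f ((g ∘ σ) i) β j)
            = (Matrix.of fun i j => f (g i) β j).submatrix σ id := rfl
        rw [hD]
        show Matrix.det ((Matrix.of fun i j => f (g i) β j).submatrix σ id)
            = ((Equiv.Perm.sign σ : ℤ) : ℝ) * Matrix.det (Matrix.of fun i j => f (g i) β j)
        rw [Matrix.det_permute]
      have e1 : ∀ σ : Equiv.Perm (Fin m), t (g ∘ σ)
          = (∏ i, ξ.w (g i)) * ((((Equiv.Perm.sign σ : ℤ) : ℝ) * ∏ i, f (g (σ i)) β i) * D g) := by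
        intro σ
        have ht' : t (g ∘ σ) = (∏ i, ξ.w ((g ∘ σ) i) * f ((g ∘ σ) i) β i) * D (g ∘ σ) := rfl
        rw [ht', hDperm σ, Finset.prod_mul_distrib]
        have hw : (∏ i, ξ.w ((g ∘ σ) i)) = ∏ i, ξ.w (g i) := Equiv.prod_comp σ fun i => ξ.w (g i)
        rw [hw]
        simp only [Function.comp]
        ring
      calc (∏ i, ξ.w (g i)) * detIm f g β
          = (∏ i, ξ.w (g i)) * (D g * D g) := by rw [detIm_eq_sq, sq]
        _ = (∏ i, ξ.w (g i)) * ((∑ σ : Equiv.Perm (Fin m),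
              ((Equiv.Perm.sign σ : ℤ) : ℝ) * ∏ i, f (g (σ i)) β i) * D g) := by
            rw [hDexp]
        _ = ∑ σ : Equiv.Perm (Fin m),
              (∏ i, ξ.w (g i)) * ((((Equiv.Perm.sign σ : ℤ) : ℝ) * ∏ i, f (g (σ i)) β i) * D g) := by
            rw [Finset.sum_mul, Finset.mul_sum]
        _ = ∑ σ : Equiv.Perm (Fin m), t (g ∘ σ) :=
            Finset.sum_congr rfl fun σ _ => (e1 σ).symm
    have step2 : ∀ σ : Equiv.Perm (Fin m), ∑ g ∈ T, t (g ∘ σ) = ∑ g ∈ T, t g := by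
      intro σ
      refine Finset.sum_nbij' (fun g => g ∘ σ) (fun g => g ∘ σ.symm) ?_ ?_ ?_ ?_ ?_
      · intro g hg; rw [hT, Fintype.mem_piFinset] at *; intro i; exact hg (σ i)
      · intro g hg; rw [hT, Fintype.mem_piFinset] at *; intro i; exact hg (σ.symm i)
      · intro g _; funext i; simp
      · intro g _; funext i; simp
      · intro g _; rfl
    calc ∑ g ∈ T, (∏ i, ξ.w (g i)) * detIm f g β
        = ∑ g ∈ T, ∑ σ : Equiv.Perm (Fin m), t (g ∘ σ) := Finset.sum_congr rfl fun g _ => step1 g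
      _ = ∑ σ : Equiv.Perm (Fin m), ∑ g ∈ T, t (g ∘ σ) := Finset.sum_comm
      _ = ∑ _σ : Equiv.Perm (Fin m), ∑ g ∈ T, t g :=
          Finset.sum_congr rfl fun σ _ => step2 σ
      _ = (m.factorial : ℝ) * ∑ g ∈ T, t g := by
          rw [Finset.sum_const, Finset.card_univ, Fintype.card_perm, Fintype.card_fin,
            nsmul_eq_mul]
  rw [hdet, hsym]
  rw [inv_mul_cancel_left₀ (by exact_mod_cast Nat.factorial_ne_zero m)]

lemma infoMat_det_nonneg {X : Type*} {m : ℕ} (f : X → ℝ → Fin m → ℝ) (ξ : Design X) (β : ℝ) :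
    0 ≤ (infoMat f ξ β).det := by
  rw [infoMat_det_eq]
  refine mul_nonneg (by positivity) (Finset.sum_nonneg fun g hg => ?_)
  rw [Fintype.mem_piFinset] at hg
  refine mul_nonneg (Finset.prod_nonneg fun i _ => (ξ.w_pos _ (hg i)).le) ?_
  rw [detIm]; positivity


lemma one_le_abs_nat_sub {x y : ℕ} (hxy : x ≠ y) : (1:ℝ) ≤ |(x:ℝ) - (y:ℝ)| := by
  have h : ((x:ℤ) - y) ≠ 0 := by
    intro h; apply hxy; exact_mod_cast sub_eq_zero.mp h
  have := Int.one_le_abs h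
  calc (1:ℝ) = ((1:ℤ):ℝ) := by norm_num
    _ ≤ ((|(x:ℤ) - y| : ℤ) : ℝ) := by exact_mod_cast this
    _ = |(x:ℝ) - y| := by push_cast [abs_sub_comm]; rw [abs_sub_comm]

lemma exists_separated (P : Finset ℝ) (K : ℕ) (hP : P.card ≤ K) (a B : ℝ) (hB : 0 < B) :
    ∃ t ∈ Set.Icc a (a + B), ∀ p ∈ P, B / (2 * ((K:ℝ) + 1)) ≤ |t - p| := by
  by_contra hcon
  push_neg at hcon
  set d := B / (2 * ((K:ℝ) + 1)) with hd
  have hKpos : (0:ℝ) < 2 * ((K:ℝ) + 1) := by positivity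
  have hdpos : 0 < d := by positivity
  have hdB : 2 * ((K:ℝ) + 1) * d = B := by
    rw [hd]; field_simp
  have hmem : ∀ i : Fin (K+1), a + (2 * (i:ℝ) + 1) * d ∈ Set.Icc a (a + B) := by
    intro i
    have hi : (i:ℝ) ≤ K := by exact_mod_cast Nat.lt_succ_iff.mp i.isLt
    constructor
    · nlinarith
    · nlinarith
  choose p hpP hpd using fun i : Fin (K+1) => hcon _ (hmem i)
  have hinj : Function.Injective p := by
    intro i j hij
    by_contra hne
    have h1 : |(a + (2 * (i:ℝ) + 1) * d) - (a + (2 * (j:ℝ) + 1) * d)| < 2 * d := by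
      calc |(a + (2 * (i:ℝ) + 1) * d) - (a + (2 * (j:ℝ) + 1) * d)|
          ≤ |(a + (2 * (i:ℝ) + 1) * d) - p i| + |p i - (a + (2 * (j:ℝ) + 1) * d)| :=
            abs_sub_le _ _ _
        _ < d + d := by
            have h2 := hpd i
            have h3 := hpd j
            rw [abs_sub_comm] at h3
            rw [hij] at h2
            exact add_lt_add (by rw [← hij] at h2; exact h2) (by rw [hij]; exact h3)
        _ = 2 * d := by ring
    have h4 : (1:ℝ) ≤ |(i:ℝ) - (j:ℝ)| := by
      refine one_le_abs_nat_sub ?_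
      exact fun h => hne (Fin.ext h)
    have h5 : |(a + (2 * (i:ℝ) + 1) * d) - (a + (2 * (j:ℝ) + 1) * d)|
        = 2 * |(i:ℝ) - (j:ℝ)| * d := by
      rw [show (a + (2 * (i:ℝ) + 1) * d) - (a + (2 * (j:ℝ) + 1) * d)
          = (2 * ((i:ℝ) - (j:ℝ))) * d by ring, abs_mul, abs_mul]
      rw [abs_of_pos (by norm_num : (0:ℝ) < 2), abs_of_pos hdpos]
    nlinarith
  have hcard : K + 1 ≤ P.card := by
    have h6 : Function.Injective (fun i : Fin (K+1) => (⟨p i, hpP i⟩ : {x // x ∈ P})) := by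
      intro i j h
      exact hinj (congrArg Subtype.val h)
    have := Fintype.card_le_of_injective _ h6
    simpa [Fintype.card_coe] using this
  omega

noncomputable def enumS {X : Type*} [Nonempty X] (m : ℕ) (S : Finset X) : Fin m → X :=
  if h : S.card = m then fun i => (S.equivFin.symm (Fin.cast h.symm i) : X)
  else fun _ => Classical.arbitrary X

lemma exists_perm_eq {X : Type*} [Nonempty X] [DecidableEq X] {m : ℕ} {g : Fin m → X}
    (hg : Function.Injective g) :
    ∃ σ : Equiv.Perm (Fin m), g = enumS m (Finset.image g Finset.univ) ∘ σ := by
  classical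
  set S := Finset.image g Finset.univ with hS
  have hcard : S.card = m := by
    rw [hS, Finset.card_image_of_injective _ hg, Finset.card_univ, Fintype.card_fin]
  have he : enumS m S = fun i => (S.equivFin.symm (Fin.cast hcard.symm i) : X) :=
    dif_pos hcard
  let ee : Fin m ≃ {x // x ∈ S} := (finCongr hcard.symm).trans S.equivFin.symm
  have hee : ∀ i, enumS m S i = (ee i : X) := by
    intro i; rw [he]; rfl
  let gS : Fin m → {x // x ∈ S} := fun i => ⟨g i, by rw [hS]; exact Finset.mem_image_of_mem g (Finset.mem_univ i)⟩
  have hgSinj : Function.Injective gS := by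
    intro i j h
    exact hg (congrArg Subtype.val h)
  have hgSbij : Function.Bijective gS := by
    refine (Fintype.bijective_iff_injective_and_card _).2 ⟨hgSinj, ?_⟩
    rw [Fintype.card_coe, hcard, Fintype.card_fin]
  let eg : Fin m ≃ {x // x ∈ S} := Equiv.ofBijective gS hgSbij
  refine ⟨eg.trans ee.symm, ?_⟩
  funext i
  have : enumS m S ((eg.trans ee.symm) i) = (ee (ee.symm (eg i)) : X) := hee _
  rw [Function.comp_apply, this, Equiv.apply_symm_apply]
  rfl

/-- Upper bound (A.10) for general `m`: under conditions (2.9) and (2.4)/(3.1), every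
design supported at at most `N` points satisfies `Φ(ξ) ≤ c₀ m c₁ (2(K+1)/B)^γ`, where
`K = m·C(N,m)` and `B = ℓ(β_max) − ℓ(β_min)`. -/
theorem maximin_upper_bound_general
    (X : Type*) [Nonempty X] (m : ℕ) (hm : 1 ≤ m)
    (βmin βmax : ℝ) (hββ : βmin < βmax)
    (f : X → ℝ → Fin m → ℝ) (ℓ : ℝ → ℝ)
    (hmono : MonotoneOn ℓ (Set.Icc βmin βmax))
    (hcont : ContinuousOn ℓ (Set.Icc βmin βmax))
    (ξopt : ℝ → Design X)
    (hpos : ∀ β ∈ Set.Icc βmin βmax, 0 < (infoMat f (ξopt β) β).det)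
    (hopt : ∀ β ∈ Set.Icc βmin βmax, ∀ ξ : Design X,
        (infoMat f ξ β).det ≤ (infoMat f (ξopt β) β).det)
    (c₀ c₁ γ : ℝ) (hc₀ : 0 < c₀) (hc₁ : 0 < c₁) (hγ : 0 < γ)
    -- condition (2.9)
    (h29 : ∀ xs : Fin m → X, ∃ b : Fin m → ℝ,
        (∀ j, b j ∈ Set.Icc βmin βmax) ∧
        ∀ β ∈ Set.Icc βmin βmax,
          detIm f xs β ≤ c₀ * ∑ j, (infoMat f (ξopt (b j)) β).det)
    -- condition (2.4)/(3.1):  Q(β,β̃) ≤ c₁ |ℓ(β) − ℓ(β̃)|^(−γ)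
    (h24 : ∀ β ∈ Set.Icc βmin βmax, ∀ b ∈ Set.Icc βmin βmax,
        ((infoMat f (ξopt b) β).det / (infoMat f (ξopt β) β).det)
          * |ℓ β - ℓ b| ^ γ ≤ c₁)
    (B : ℝ) (hB : B = ℓ βmax - ℓ βmin) (hBpos : 0 < B)
    (N : ℕ) (ξ : Design X) (hcard : ξ.support.card ≤ N)
    (K : ℕ) (hK : K = m * N.choose m) :
    (⨅ β : Set.Icc βmin βmax,
        (infoMat f ξ (β : ℝ)).det / (infoMat f (ξopt (β : ℝ)) (β : ℝ)).det)
      ≤ c₀ * (m : ℝ) * c₁ * (2 * ((K : ℝ) + 1) / B) ^ γ := by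
  classical
  have hIcc : βmin ≤ βmax := hββ.le
  haveI : Nonempty (Set.Icc βmin βmax) := ⟨⟨βmin, le_refl _, hIcc⟩⟩
  choose bfun hbIcc hbBound using h29
  set P : Finset ℝ := Finset.image (fun q : Finset X × Fin m => ℓ (bfun (enumS m q.1) q.2))
      ((ξ.support.powersetCard m) ×ˢ (Finset.univ : Finset (Fin m))) with hP
  have hPcard : P.card ≤ K :=
    calc P.card ≤ ((ξ.support.powersetCard m) ×ˢ (Finset.univ : Finset (Fin m))).card :=
        Finset.card_image_le
      _ = (ξ.support.powersetCard m).card * m := by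
          rw [Finset.card_product, Finset.card_univ, Fintype.card_fin]
      _ ≤ N.choose m * m := by
          rw [Finset.card_powersetCard]
          exact Nat.mul_le_mul_right m (Nat.choose_le_choose m hcard)
      _ = K := by rw [hK, Nat.mul_comm]
  obtain ⟨t, htmem, htsep⟩ := exists_separated P K hPcard (ℓ βmin) B hBpos
  have htmem' : t ∈ Set.Icc (ℓ βmin) (ℓ βmax) := by
    refine ⟨htmem.1, ?_⟩
    have := htmem.2
    rw [hB] at this
    linarith
  obtain ⟨βs, hβsIcc, hℓβs⟩ := intermediate_value_Icc hIcc hcont htmem'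
  set d := B / (2 * ((K:ℝ) + 1)) with hd
  have hdpos : 0 < d := by positivity
  have hden : 0 < (infoMat f (ξopt βs) βs).det := hpos βs hβsIcc
  set E := (2 * ((K:ℝ) + 1) / B) ^ γ with hE
  have hEpos : 0 < E := Real.rpow_pos_of_pos (by positivity) γ
  have hEd : E = (d ^ γ)⁻¹ := by
    rw [hE, hd, ← Real.inv_rpow (by positivity : (0:ℝ) ≤ B / (2 * ((K:ℝ) + 1))), inv_div]
  have hkey : ∀ S ∈ ξ.support.powersetCard m, ∀ j : Fin m,
      (infoMat f (ξopt (bfun (enumS m S) j)) βs).det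
        ≤ c₁ * E * (infoMat f (ξopt βs) βs).det := by
    intro S hS j
    set b := bfun (enumS m S) j with hb
    have hbI := hbIcc (enumS m S) j
    have hpP : ℓ b ∈ P := by
      rw [hP]
      exact Finset.mem_image.2 ⟨(S, j), Finset.mem_product.2 ⟨hS, Finset.mem_univ j⟩, rfl⟩
    have hsep : d ≤ |ℓ βs - ℓ b| := by rw [hℓβs]; exact htsep _ hpP
    have h24' := h24 βs hβsIcc b hbI
    have hnum : 0 ≤ (infoMat f (ξopt b) βs).det := infoMat_det_nonneg f _ _
    have hQ : 0 ≤ (infoMat f (ξopt b) βs).det / (infoMat f (ξopt βs) βs).det :=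
      div_nonneg hnum hden.le
    have hdγ : d ^ γ ≤ |ℓ βs - ℓ b| ^ γ := Real.rpow_le_rpow hdpos.le hsep hγ.le
    have hdγpos : 0 < d ^ γ := Real.rpow_pos_of_pos hdpos γ
    have h1 : (infoMat f (ξopt b) βs).det / (infoMat f (ξopt βs) βs).det * d ^ γ ≤ c₁ :=
      le_trans (mul_le_mul_of_nonneg_left hdγ hQ) h24'
    have h2 : (infoMat f (ξopt b) βs).det / (infoMat f (ξopt βs) βs).det ≤ c₁ * E := by
      rw [hEd]
      calc (infoMat f (ξopt b) βs).det / (infoMat f (ξopt βs) βs).det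
          ≤ c₁ / d ^ γ := (le_div_iff₀ hdγpos).2 h1
        _ = c₁ * (d ^ γ)⁻¹ := div_eq_mul_inv _ _
    calc (infoMat f (ξopt b) βs).det
        = (infoMat f (ξopt b) βs).det / (infoMat f (ξopt βs) βs).det
            * (infoMat f (ξopt βs) βs).det := (div_mul_cancel₀ _ hden.ne').symm
      _ ≤ c₁ * E * (infoMat f (ξopt βs) βs).det := mul_le_mul_of_nonneg_right h2 hden.le
  have hCpos : 0 ≤ c₀ * ((m:ℝ) * (c₁ * E * (infoMat f (ξopt βs) βs).det)) :=
    mul_nonneg hc₀.le (mul_nonneg (Nat.cast_nonneg m)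
      (mul_nonneg (mul_nonneg hc₁.le hEpos.le) hden.le))
  have hterm : ∀ g ∈ Fintype.piFinset (fun _ : Fin m => ξ.support),
      detIm f g βs ≤ c₀ * ((m:ℝ) * (c₁ * E * (infoMat f (ξopt βs) βs).det)) := by
    intro g hg
    rw [Fintype.mem_piFinset] at hg
    by_cases hginj : Function.Injective g
    · obtain ⟨σ, hσ⟩ := exists_perm_eq hginj
      set S := Finset.image g Finset.univ with hSdef
      have hSmem : S ∈ ξ.support.powersetCard m := by
        refine Finset.mem_powersetCard.2 ⟨?_, ?_⟩
        · intro x hx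
          rw [hSdef] at hx
          obtain ⟨i, _, rfl⟩ := Finset.mem_image.1 hx
          exact hg i
        · rw [hSdef, Finset.card_image_of_injective _ hginj, Finset.card_univ,
            Fintype.card_fin]
      have hdeteq : detIm f g βs = detIm f (enumS m S) βs := by
        conv_lhs => rw [hσ]
        exact detIm_comp_perm f _ σ βs
      rw [hdeteq]
      calc detIm f (enumS m S) βs
          ≤ c₀ * ∑ j, (infoMat f (ξopt (bfun (enumS m S) j)) βs).det :=
            hbBound (enumS m S) βs hβsIcc
        _ ≤ c₀ * ∑ _j : Fin m, c₁ * E * (infoMat f (ξopt βs) βs).det :=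
            mul_le_mul_of_nonneg_left
              (Finset.sum_le_sum fun j _ => hkey S hSmem j) hc₀.le
        _ = c₀ * ((m:ℝ) * (c₁ * E * (infoMat f (ξopt βs) βs).det)) := by
            rw [Finset.sum_const, Finset.card_univ, Fintype.card_fin, nsmul_eq_mul]
    · have hz : detIm f g βs = 0 := by
        rw [detIm]
        obtain ⟨a, b, hab, hne⟩ := Function.not_injective_iff.1 hginj
        have h0 : Matrix.det (Matrix.of fun i j => f (g j) βs i) = 0 :=
          Matrix.det_zero_of_column_eq hne fun k => by
            show f (g a) βs k = f (g b) βs k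
            rw [hab]
        rw [h0]
        norm_num
      rw [hz]
      exact hCpos
  have hsum : (infoMat f ξ βs).det
      ≤ c₀ * ((m:ℝ) * (c₁ * E * (infoMat f (ξopt βs) βs).det)) := by
    rw [infoMat_det_eq]
    have hs1 : ∑ g ∈ Fintype.piFinset (fun _ : Fin m => ξ.support),
        (∏ i, ξ.w (g i)) * detIm f g βs
        ≤ ∑ g ∈ Fintype.piFinset (fun _ : Fin m => ξ.support),
            (∏ i, ξ.w (g i)) * (c₀ * ((m:ℝ) * (c₁ * E * (infoMat f (ξopt βs) βs).det))) := by
      refine Finset.sum_le_sum fun g hg => ?_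
      refine mul_le_mul_of_nonneg_left (hterm g hg) ?_
      rw [Fintype.mem_piFinset] at hg
      exact Finset.prod_nonneg fun i _ => (ξ.w_pos _ (hg i)).le
    have hs2 : ∑ g ∈ Fintype.piFinset (fun _ : Fin m => ξ.support),
        (∏ i, ξ.w (g i)) * (c₀ * ((m:ℝ) * (c₁ * E * (infoMat f (ξopt βs) βs).det)))
        = c₀ * ((m:ℝ) * (c₁ * E * (infoMat f (ξopt βs) βs).det)) := by
      rw [← Finset.sum_mul, ← Finset.prod_univ_sum]
      simp [ξ.sum_one]
    have hfac : ((m.factorial : ℝ))⁻¹ ≤ 1 := by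
      rw [inv_le_one_iff₀]
      right
      exact_mod_cast Nat.one_le_iff_ne_zero.2 (Nat.factorial_ne_zero m)
    calc (m.factorial : ℝ)⁻¹ * ∑ g ∈ Fintype.piFinset (fun _ : Fin m => ξ.support),
          (∏ i, ξ.w (g i)) * detIm f g βs
        ≤ (m.factorial : ℝ)⁻¹ * (c₀ * ((m:ℝ) * (c₁ * E * (infoMat f (ξopt βs) βs).det))) :=
          mul_le_mul_of_nonneg_left (le_trans hs1 (le_of_eq hs2)) (by positivity)
      _ ≤ 1 * (c₀ * ((m:ℝ) * (c₁ * E * (infoMat f (ξopt βs) βs).det))) :=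
          mul_le_mul_of_nonneg_right hfac hCpos
      _ = c₀ * ((m:ℝ) * (c₁ * E * (infoMat f (ξopt βs) βs).det)) := one_mul _
  have hval : (infoMat f ξ βs).det / (infoMat f (ξopt βs) βs).det
      ≤ c₀ * (m:ℝ) * c₁ * E := by
    rw [div_le_iff₀ hden]
    calc (infoMat f ξ βs).det
        ≤ c₀ * ((m:ℝ) * (c₁ * E * (infoMat f (ξopt βs) βs).det)) := hsum
      _ = c₀ * (m:ℝ) * c₁ * E * (infoMat f (ξopt βs) βs).det := by ring
  have hbdd : BddBelow (Set.range fun β : Set.Icc βmin βmax =>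
      (infoMat f ξ (β : ℝ)).det / (infoMat f (ξopt (β : ℝ)) (β : ℝ)).det) := by
    refine ⟨0, ?_⟩
    rintro y ⟨β, rfl⟩
    exact div_nonneg (infoMat_det_nonneg f ξ _) (hpos β β.2).le
  exact le_trans (ciInf_le hbdd (⟨βs, hβsIcc⟩ : Set.Icc βmin βmax)) hval
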